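/- In S = F_q[X_1,...,X_{s-1}]/⟨X_1^{ρ_1}-1,...,X_{s-1}^{ρ_{s-1}}-1⟩, let p ∈ S be nonzero with lexicographic degree a, and let l ∈ S be nonzero with deg l <_+ (ρ_1,...,ρ_{s-1}) - a componentwise. Then l · p ≠ 0 in S. -/

import Mathlib

noncomputable instance lexLO (s : ℕ) : LinearOrder (Lex (Fin s → ℕ)) :=
  have : WellFoundedLT (Fin s) := Finite.to_wellFoundedLT
  @Pi.Lex.linearOrder (Fin s) (fun _ => ℕ) _ this _

/-- Model of the quotient ring `F_q[X₁,…,X_s]/⟨X_i^{ρ_i}-1⟩` as the group algebra of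
`G_s = ℤ/ρ₁ℤ × ⋯ × ℤ/ρ_sℤ`: elements are `∑_{α ∈ G_s} f_α x^α` with convolution product,
so that `x_i^{ρ_i} = 1`. -/
abbrev QR (F : Type) [Field F] {s : ℕ} (ρ : Fin s → ℕ) : Type :=
  AddMonoidAlgebra F (∀ i : Fin s, ZMod (ρ i))

/-- The degree of a nonzero `f`: the lexicographically largest exponent tuple
`α ∈ ∏_i {0,…,ρ_i-1}` with `f_α ≠ 0`. -/
noncomputable def deg {F : Type} [Field F] {s : ℕ} {ρ : Fin s → ℕ}
    (f : QR F ρ) (hf : f ≠ 0) : Fin s → ℕ :=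
  ofLex (f.coeff.support.sup' (by simpa [Finsupp.support_nonempty_iff] using hf)
    (fun α => toLex fun i => (α i).val))

lemma lex_add_lt_add_right {s : ℕ} {a b : Fin s → ℕ} (c : Fin s → ℕ)
    (h : toLex a < toLex b) : toLex (a + c) < toLex (b + c) := by
  obtain ⟨i, h1, h2⟩ := h
  refine ⟨i, fun j hj => ?_, ?_⟩
  · show a j + c j = b j + c j
    rw [show a j = b j from h1 j hj]
  · show a i + c i < b i + c i
    exact Nat.add_lt_add_right h2 _

lemma lex_add_le_add_left {s : ℕ} {a b : Fin s → ℕ} (c : Fin s → ℕ)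
    (h : toLex a ≤ toLex b) : toLex (c + a) ≤ toLex (c + b) := by
  rcases eq_or_lt_of_le h with h | h
  · rw [toLex.injective h]
  · obtain ⟨i, h1, h2⟩ := h
    refine le_of_lt ⟨i, fun j hj => ?_, ?_⟩
    · show c j + a j = c j + b j
      rw [show a j = b j from h1 j hj]
    · show c i + a i < c i + b i
      exact Nat.add_lt_add_left h2 _

/-- In `S = F_q[X₁,…,X_{s-1}]/⟨X_i^{ρ_i}-1⟩`: if `p ≠ 0` has degree `a` and `l ≠ 0`
satisfies `deg l <₊ ρ - a` componentwise (equivalently `deg l + a <₊ ρ`),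
then `l · p ≠ 0`. -/
theorem mul_ne_zero_of_deg_lt {F : Type} [Field F] {t : ℕ} {ρ : Fin t → ℕ} [∀ i, NeZero (ρ i)]
    (p l : QR F ρ) (hp : p ≠ 0) (hl : l ≠ 0)
    (hlt : ∀ i, deg l hl i + deg p hp i < ρ i) :
    l * p ≠ 0 := by
  classical
  haveI : WellFoundedLT (Fin t) := Finite.to_wellFoundedLT
  set dl := deg l hl with hdl
  set dp := deg p hp with hdp
  have hlsupp : l.coeff.support.Nonempty := by simpa [Finsupp.support_nonempty_iff] using hl
  have hpsupp : p.coeff.support.Nonempty := by simpa [Finsupp.support_nonempty_iff] using hp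
  -- the degrees are attained
  obtain ⟨α₀, hα₀, hα₀eq⟩ := Finset.exists_mem_eq_sup' hlsupp
    (fun α => toLex fun i => (α i).val)
  obtain ⟨β₀, hβ₀, hβ₀eq⟩ := Finset.exists_mem_eq_sup' hpsupp
    (fun α => toLex fun i => (α i).val)
  have hα₀v : (fun i => (α₀ i).val) = dl := by
    rw [hdl, deg]; exact congrArg ofLex hα₀eq.symm
  have hβ₀v : (fun i => (β₀ i).val) = dp := by
    rw [hdp, deg]; exact congrArg ofLex hβ₀eq.symm
  -- target exponent
  set D : ∀ i, ZMod (ρ i) := fun i => ((dl i + dp i : ℕ) : ZMod (ρ i)) with hD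
  have hsumD : α₀ + β₀ = D := by
    funext i
    have h1 : dl i = (α₀ i).val := (congrFun hα₀v i).symm
    have h2 : dp i = (β₀ i).val := (congrFun hβ₀v i).symm
    show α₀ i + β₀ i = ((dl i + dp i : ℕ) : ZMod (ρ i))
    rw [h1, h2, Nat.cast_add]
    simp [ZMod.natCast_val, ZMod.cast_id]
  -- uniqueness of decomposition
  have key : ∀ α ∈ l.coeff.support, ∀ β ∈ p.coeff.support, α + β = D → α = α₀ ∧ β = β₀ := by
    intro α hα β hβ hαβ
    set vα : Fin t → ℕ := fun i => (α i).val with hvα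
    set vβ : Fin t → ℕ := fun i => (β i).val with hvβ
    have hle1 : toLex vα ≤ toLex dl := by
      have h' := Finset.le_sup' (s := l.coeff.support) (fun α => toLex fun i => (α i).val) hα
      rw [hα₀eq] at h'
      exact le_trans h' (le_of_eq (congrArg toLex hα₀v))
    have hle2 : toLex vβ ≤ toLex dp := by
      have h' := Finset.le_sup' (s := p.coeff.support) (fun α => toLex fun i => (α i).val) hβ
      rw [hβ₀eq] at h'
      exact le_trans h' (le_of_eq (congrArg toLex hβ₀v))
    -- componentwise: vα i + vβ i ≡ dl i + dp i [MOD ρ i] and both < 2 ρ i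
    have hcomp : ∀ i, vα i + vβ i = dl i + dp i ∨ vα i + vβ i = dl i + dp i + ρ i := by
      intro i
      have hmod : (vα i + vβ i) % ρ i = (dl i + dp i) % ρ i := by
        have h0 := congrFun hαβ i
        simp only [Pi.add_apply] at h0
        have h2 : ((vα i + vβ i : ℕ) : ZMod (ρ i)) = ((dl i + dp i : ℕ) : ZMod (ρ i)) := by
          rw [Nat.cast_add]
          show ((α i).val : ZMod (ρ i)) + ((β i).val : ZMod (ρ i)) = _
          rw [ZMod.natCast_val, ZMod.natCast_val, ZMod.cast_id, ZMod.cast_id]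
          exact h0
        have := congrArg ZMod.val h2
        rwa [ZMod.val_natCast, ZMod.val_natCast] at this
      have hρ : (dl i + dp i) % ρ i = dl i + dp i := Nat.mod_eq_of_lt (hlt i)
      have h1 : vα i < ρ i := ZMod.val_lt _
      have h2 : vβ i < ρ i := ZMod.val_lt _
      rcases Nat.lt_or_ge (vα i + vβ i) (ρ i) with h | h
      · left; rw [← Nat.mod_eq_of_lt h, hmod, hρ]
      · right
        have hlt2 : vα i + vβ i - ρ i < ρ i := by omega
        have : (vα i + vβ i) % ρ i = vα i + vβ i - ρ i := by
          rw [← Nat.mod_eq_of_lt hlt2]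
          conv_lhs => rw [show vα i + vβ i = (vα i + vβ i - ρ i) + ρ i by omega]
          rw [Nat.add_mod_right]
        omega
    -- pointwise ≥ and lex ≤ give equality
    have hptle : dl + dp ≤ vα + vβ := by
      intro i; rcases hcomp i with h | h <;> simp only [Pi.add_apply] <;> omega
    have hlex1 : toLex (vα + vβ) ≤ toLex (vα + dp) := lex_add_le_add_left vα hle2
    have hlex2 : toLex (vα + dp) ≤ toLex (dl + dp) := by
      rcases eq_or_lt_of_le hle1 with h | h
      · rw [toLex.injective h]
      · exact le_of_lt (lex_add_lt_add_right dp h)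
    have hlexle : toLex (vα + vβ) ≤ toLex (dl + dp) := le_trans hlex1 hlex2
    have heq : vα + vβ = dl + dp :=
      toLex.injective (le_antisymm hlexle (Pi.toLex_monotone hptle))
    -- now vα = dl and vβ = dp
    have hvαeq : vα = dl := by
      by_contra hne
      have h1 : toLex vα < toLex dl := lt_of_le_of_ne hle1 (fun h => hne (toLex.injective h))
      have : toLex (vα + vβ) < toLex (dl + dp) :=
        lt_of_lt_of_le (lex_add_lt_add_right vβ h1) (lex_add_le_add_left dl hle2)
      rw [heq] at this
      exact lt_irrefl _ this
    have hvβeq : vβ = dp := by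
      funext i
      have h1 := congrFun heq i
      have h2 := congrFun hvαeq i
      simp only [Pi.add_apply] at h1
      omega
    constructor
    · funext i
      have h1 : (α i).val = (α₀ i).val := by
        rw [show (α i).val = vα i from rfl, hvαeq, ← hα₀v]
      have h2 := congrArg (fun n : ℕ => (n : ZMod (ρ i))) h1
      simpa [ZMod.natCast_val, ZMod.cast_id] using h2
    · funext i
      have h1 : (β i).val = (β₀ i).val := by
        rw [show (β i).val = vβ i from rfl, hvβeq, ← hβ₀v]
      have h2 := congrArg (fun n : ℕ => (n : ZMod (ρ i))) h1
      simpa [ZMod.natCast_val, ZMod.cast_id] using h2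
  -- the coefficient of l * p at D is l α₀ * p β₀ ≠ 0
  intro hzero
  have hcoef : (l * p).coeff D = l.coeff α₀ * p.coeff β₀ := by
    rw [AddMonoidAlgebra.mul_apply]
    rw [Finsupp.sum, Finset.sum_eq_single α₀]
    · rw [Finsupp.sum, Finset.sum_eq_single β₀]
      · rw [if_pos hsumD]
      · intro β hβ hne
        rw [if_neg]
        intro h
        exact hne (key α₀ hα₀ β hβ h).2
      · intro h; exact absurd hβ₀ h
    · intro α hα hne
      rw [Finsupp.sum, Finset.sum_eq_zero]
      intro β hβ
      rw [if_neg]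
      intro h
      exact hne (key α hα β hβ h).1
    · intro h; exact absurd hα₀ h
  rw [hzero] at hcoef
  simp only [AddMonoidAlgebra.coeff_zero, Finsupp.coe_zero, Pi.zero_apply] at hcoef
  exact (mul_ne_zero (Finsupp.mem_support_iff.mp hα₀) (Finsupp.mem_support_iff.mp hβ₀)) hcoef.symm
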